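/- If f, g : [a,b] → [0,∞) are both convex on [a,b] (a, b ∈ ℝ, a < b) with f·g integrable, then (1/(b-a)) ∫_a^b f(x)g(x) dx ≤ (1/3)·(f(a)g(a)+f(b)g(b)) + (1/6)·(f(a)g(b)+f(b)g(a)). -/

import Mathlib

open MeasureTheory Set

theorem product_hadamard_convex_convex
    (a b : ℝ) (hab : a < b) (f g : ℝ → ℝ)
    (hf0 : ∀ x ∈ Set.Icc a b, 0 ≤ f x) (hg0 : ∀ x ∈ Set.Icc a b, 0 ≤ g x)
    (hf : ConvexOn ℝ (Set.Icc a b) f) (hg : ConvexOn ℝ (Set.Icc a b) g)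
    (hfg : IntervalIntegrable (fun x => f x * g x) volume a b) :
    (1 / (b - a)) * ∫ x in a..b, f x * g x ≤
      (1 / 3) * (f a * g a + f b * g b) + (1 / 6) * (f a * g b + f b * g a) := by
  have hba : (0:ℝ) < b - a := by linarith
  set A := f a with hA
  set B := f b with hB
  set C := g a with hC
  set D := g b with hD
  have hA0 : 0 ≤ A := hf0 a (left_mem_Icc.2 hab.le)
  have hB0 : 0 ≤ B := hf0 b (right_mem_Icc.2 hab.le)
  have hC0 : 0 ≤ C := hg0 a (left_mem_Icc.2 hab.le)
  have hD0 : 0 ≤ D := hg0 b (right_mem_Icc.2 hab.le)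
  set Φ : ℝ → ℝ := fun x =>
    ((b - x) * A + (x - a) * B) * ((b - x) * C + (x - a) * D) / (b - a) ^ 2 with hΦ
  have hΦcont : Continuous Φ := by
    apply Continuous.div_const
    fun_prop
  -- pointwise bound
  have hpt : ∀ x ∈ Set.Icc a b, f x * g x ≤ Φ x := by
    intro x hx
    obtain ⟨hax, hxb⟩ := hx
    have hw1 : (0:ℝ) ≤ (b - x) / (b - a) := div_nonneg (by linarith) hba.le
    have hw2 : (0:ℝ) ≤ (x - a) / (b - a) := div_nonneg (by linarith) hba.le
    have hws : (b - x) / (b - a) + (x - a) / (b - a) = 1 := by field_simp; ring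
    have hxeq : ((b - x) / (b - a)) * a + ((x - a) / (b - a)) * b = x := by
      field_simp
      ring
    have hfx : f x ≤ (b - x) / (b - a) * A + (x - a) / (b - a) * B := by
      have key := hf.2 (left_mem_Icc.2 hab.le) (right_mem_Icc.2 hab.le) hw1 hw2 hws
      rw [smul_eq_mul, smul_eq_mul, hxeq, smul_eq_mul, smul_eq_mul] at key
      exact key
    have hgx : g x ≤ (b - x) / (b - a) * C + (x - a) / (b - a) * D := by
      have key := hg.2 (left_mem_Icc.2 hab.le) (right_mem_Icc.2 hab.le) hw1 hw2 hws
      rw [smul_eq_mul, smul_eq_mul, hxeq, smul_eq_mul, smul_eq_mul] at key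
      exact key
    have hb1 : 0 ≤ (b - x) / (b - a) * C + (x - a) / (b - a) * D :=
      add_nonneg (mul_nonneg hw1 hC0) (mul_nonneg hw2 hD0)
    have hfx0 : 0 ≤ f x := hf0 x ⟨hax, hxb⟩
    have hmul : f x * g x ≤
        ((b - x) / (b - a) * A + (x - a) / (b - a) * B) *
          ((b - x) / (b - a) * C + (x - a) / (b - a) * D) :=
      mul_le_mul hfx hgx (hg0 x ⟨hax, hxb⟩) (le_trans hfx0 hfx)
    have heq : ((b - x) / (b - a) * A + (x - a) / (b - a) * B) *
        ((b - x) / (b - a) * C + (x - a) / (b - a) * D) = Φ x := by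
      rw [hΦ]
      have hne : (b - a) ≠ 0 := hba.ne'
      field_simp
    linarith [hmul, heq.le]
  have hΦint : IntervalIntegrable Φ volume a b := hΦcont.intervalIntegrable a b
  have hle : (∫ x in a..b, f x * g x) ≤ ∫ x in a..b, Φ x := by
    apply intervalIntegral.integral_mono_on hab.le hfg hΦint
    intro x hx
    exact hpt x hx
  -- compute the integral of Φ
  set c2 : ℝ := A * C - (A * D + B * C) + B * D with hc2
  set c1 : ℝ := -2 * b * (A * C) + (a + b) * (A * D + B * C) - 2 * a * (B * D) with hc1
  set c0 : ℝ := b ^ 2 * (A * C) - a * b * (A * D + B * C) + a ^ 2 * (B * D) with hc0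
  set H : ℝ → ℝ := fun x => (c2 * x ^ 3 / 3 + c1 * x ^ 2 / 2 + c0 * x) / (b - a) ^ 2 with hH
  have hderiv : ∀ x ∈ Set.uIcc a b, HasDerivAt H (Φ x) x := by
    intro x _
    have h1 : HasDerivAt (fun x : ℝ => c2 * x ^ 3 / 3 + c1 * x ^ 2 / 2 + c0 * x)
        (c2 * x ^ 2 + c1 * x + c0) x := by
      have h3 := (hasDerivAt_pow 3 x).const_mul c2 |>.div_const 3
      have h2 := (hasDerivAt_pow 2 x).const_mul c1 |>.div_const 2
      have h0 := (hasDerivAt_id x).const_mul c0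
      convert (h3.add h2).add h0 using 1
      · rfl
      · rfl
      · funext y; simp
      · norm_num; ring
    have h2 : HasDerivAt H ((c2 * x ^ 2 + c1 * x + c0) / (b - a) ^ 2) x :=
      h1.div_const _
    convert h2 using 1
    rw [hΦ, hc2, hc1, hc0]
    field_simp
    ring
  have hint : (∫ x in a..b, Φ x) = H b - H a := by
    apply intervalIntegral.integral_eq_sub_of_hasDerivAt hderiv hΦint
  have hval : H b - H a =
      (b - a) * ((1 / 3) * (A * C + B * D) + (1 / 6) * (A * D + B * C)) := by
    rw [hH, hc2, hc1, hc0]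
    field_simp
    ring
  have hfin : (1 / (b - a)) * ∫ x in a..b, f x * g x ≤
      (1 / (b - a)) * ((b - a) * ((1 / 3) * (A * C + B * D) + (1 / 6) * (A * D + B * C))) := by
    apply mul_le_mul_of_nonneg_left _ (by positivity)
    rw [← hval, ← hint]
    exact hle
  calc (1 / (b - a)) * ∫ x in a..b, f x * g x
      ≤ (1 / (b - a)) * ((b - a) * ((1 / 3) * (A * C + B * D) + (1 / 6) * (A * D + B * C))) := hfin
    _ = (1 / 3) * (A * C + B * D) + (1 / 6) * (A * D + B * C) := by
        field_simp
    _ = (1 / 3) * (A * C + B * D) + (1 / 6) * (A * D + B * C) := rfl
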